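/- In every broadcasted party-list election E = (N, C, k, l, A, L) with ballot limit l = 1 and parties P_1, …, P_g, every winning committee W ∈ LV(E) attains the maximum CC-score among all size-k committees: s_CC(A, W) = max_{W' ⊆ C, |W'| = k} s_CC(A, W') = Σ_{i=1}^{min(k, g)} n_i. -/

import Mathlib

open Finset

lemma fin_strictMono_le {n m : ℕ} {φ : Fin n → Fin m} (h : StrictMono φ) (i : Fin n) :
    (i : ℕ) ≤ (φ i : ℕ) := by
  induction' hk : (i : ℕ) with k ih generalizing i
  · omega
  · have hk' : k < n := by omega
    have h1 : (φ ⟨k, hk'⟩ : ℕ) < (φ i : ℕ) := h (by simp [Fin.lt_def, hk])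
    have h2 := ih ⟨k, hk'⟩ rfl
    omega

lemma top_sum {g : ℕ} (w : Fin g → ℕ) (hw : ∀ a b : Fin g, a ≤ b → w b ≤ w a)
    (J : Finset (Fin g)) (m : ℕ) (hm : J.card ≤ m) :
    ∑ j ∈ J, w j ≤ ∑ j ∈ univ.filter (fun j : Fin g => (j : ℕ) < m), w j := by
  have hJg : J.card ≤ g := by simpa using Finset.card_le_univ J
  set e := J.orderEmbOfFin rfl with he
  set f : Fin J.card → Fin g := fun i => ⟨i, lt_of_lt_of_le i.isLt hJg⟩ with hf
  have hJ : J = Finset.image (fun i => e i) Finset.univ := by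
    ext x
    constructor
    · intro hx
      have hx' : x ∈ Set.range e := by
        rw [Finset.range_orderEmbOfFin J (rfl : J.card = J.card)]; exact hx
      obtain ⟨i, hi⟩ := hx'
      exact mem_image.mpr ⟨i, mem_univ i, hi⟩
    · intro hx
      obtain ⟨i, _, hi⟩ := mem_image.mp hx
      have hx' : x ∈ Set.range e := ⟨i, hi⟩
      rw [Finset.range_orderEmbOfFin J (rfl : J.card = J.card)] at hx'
      exact_mod_cast hx'
  calc ∑ j ∈ J, w j = ∑ j ∈ Finset.image (fun i => e i) Finset.univ, w j :=
        Finset.sum_congr hJ (fun _ _ => rfl)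
    _ = ∑ i ∈ (univ : Finset (Fin J.card)), w (e i) :=
        sum_image (fun a _ b _ hab => e.injective hab)
    _ ≤ ∑ i ∈ (univ : Finset (Fin J.card)), w (f i) := by
        refine sum_le_sum fun i _ => hw (f i) (e i) ?_
        have := fin_strictMono_le e.strictMono i
        simp only [hf, Fin.le_def]
        exact this
    _ = ∑ j ∈ Finset.image f Finset.univ, w j := by
        rw [sum_image (fun a _ b _ hab => by
          have : (f a : ℕ) = (f b : ℕ) := congrArg Fin.val hab
          simp only [hf] at this
          exact Fin.ext this)]
    _ ≤ ∑ j ∈ univ.filter (fun j : Fin g => (j : ℕ) < m), w j := by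
        refine sum_le_sum_of_subset ?_
        intro x hx
        obtain ⟨i, _, hi⟩ := mem_image.mp hx
        refine mem_filter.mpr ⟨mem_univ x, ?_⟩
        subst hi
        simp only [hf]
        omega

/-- An election `E = (N, C, k, l, A, L)`: voters form the finite type `V`,
candidates the finite type `C`, `k` is the committee size, `l` the ballot limit,
`A i` is the approval set of voter `i` and `L i` their ballot. -/
structure Election (V C : Type*) [Fintype V] [DecidableEq V] [Fintype C] [DecidableEq C] where
  k : ℕ
  l : ℕ
  A : V → Finset C
  L : V → Finset C
  k_le_card : k ≤ Fintype.card C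
  one_le_l : 1 ≤ l
  l_le_k : l ≤ k
  ballot_card : ∀ i, (L i).card = l
  ballot_sub_approval : ∀ i, l ≤ (A i).card → L i ⊆ A i
  approval_ssub_ballot : ∀ i, (A i).card < l → A i ⊂ L i

variable {V C : Type*} [Fintype V] [DecidableEq V] [Fintype C] [DecidableEq C]

/-- The LV-score of a candidate: the number of voters whose ballot contains it. -/
def sLVc (E : Election V C) (c : C) : ℕ := (univ.filter fun i => c ∈ E.L i).card

/-- The AV-score of a candidate: the number of voters approving it. -/
def sAVc (E : Election V C) (c : C) : ℕ := (univ.filter fun i => c ∈ E.A i).card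

/-- The LV-score of a committee. -/
def sLV (E : Election V C) (W : Finset C) : ℕ := ∑ c ∈ W, sLVc E c

/-- The AV-score of a committee. -/
def sAV (E : Election V C) (W : Finset C) : ℕ := ∑ c ∈ W, sAVc E c

/-- The winning committees of Limited Voting: size-`k` committees maximizing the LV-score. -/
def LVwin (E : Election V C) : Set (Finset C) :=
  {W | W.card = E.k ∧ ∀ W' : Finset C, W'.card = E.k → sLV E W' ≤ sLV E W}

/-- The winning committees of Approval Voting: size-`k` committees maximizing the AV-score. -/
def AVwin (E : Election V C) : Set (Finset C) :=
  {W | W.card = E.k ∧ ∀ W' : Finset C, W'.card = E.k → sAV E W' ≤ sAV E W}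

/-- The Chamberlin–Courant score of a committee: the number of represented voters. -/
def sCC (E : Election V C) (W : Finset C) : ℕ :=
  (univ.filter fun i => (W ∩ E.A i).Nonempty).card

/-- `A` is a party-list profile: approval sets are nonempty and pairwise equal or disjoint. -/
def PartyList (E : Election V C) : Prop :=
  (∀ i, (E.A i).Nonempty) ∧ ∀ i j : V, E.A i = E.A j ∨ E.A i ∩ E.A j = ∅

/-- `E` is consistent with some broadcasting (linear) order on candidates, encoded by an
injective priority function `f` (`f c < f c'` meaning `c ≻ c'`). -/
def Broadcasted (E : Election V C) : Prop :=
  ∃ f : C → ℕ, Function.Injective f ∧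
    ∀ (i : V) (c c' : C), c ∈ E.A i → c' ∈ E.A i → c ∈ E.L i → c' ∉ E.L i → f c < f c'

/-- The number of voters of party `Pj`. -/
def nParty (E : Election V C) (Pj : Finset C) : ℕ := (univ.filter fun i => E.A i = Pj).card

/-- In every broadcasted party-list election with ballot limit `l = 1` and
parties `P_1, …, P_g` (indexed with weakly decreasing popularities), every LV-winning
committee attains the maximum CC-score among all size-`k` committees, which equals
`Σ_{i=1}^{min(k, g)} n_i`. -/
theorem stmt4 (E : Election V C) (hPL : PartyList E) (hB : Broadcasted E)
    (hl : E.l = 1)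
    (g : ℕ) (P : Fin g → Finset C)
    (hPinj : Function.Injective P)
    (hPall : ∀ i : V, ∃ j, E.A i = P j)
    (hPrep : ∀ j, ∃ i : V, E.A i = P j)
    (hanti : ∀ j j' : Fin g, j ≤ j' → nParty E (P j') ≤ nParty E (P j)) :
    ∀ W ∈ LVwin E,
      (∀ W' : Finset C, W'.card = E.k → sCC E W' ≤ sCC E W) ∧
      sCC E W = ∑ j ∈ univ.filter (fun j : Fin g => (j : ℕ) < min E.k g),
        nParty E (P j) := by

  classical
  -- basic setup
  obtain ⟨f, hfinj, hf⟩ := hB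
  have hA1 : ∀ i, E.l ≤ (E.A i).card := by
    intro i; rw [hl]; exact Finset.card_pos.mpr (hPL.1 i)
  have hLA : ∀ i, E.L i ⊆ E.A i := fun i => E.ballot_sub_approval i (hA1 i)
  have hcard1 : ∀ i, (E.L i).card = 1 := fun i => (E.ballot_card i).trans hl
  choose vote hvote using fun i => Finset.card_eq_one.mp (hcard1 i)
  have hvA : ∀ i, vote i ∈ E.A i := fun i => hLA i (by rw [hvote i]; exact mem_singleton_self _)
  have hvL : ∀ i, vote i ∈ E.L i := fun i => by rw [hvote i]; exact mem_singleton_self _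
  -- same party implies same vote
  have hsame : ∀ i j, E.A i = E.A j → vote i = vote j := by
    intro i j hij
    by_contra hne
    have h1 : f (vote i) < f (vote j) := by
      refine hf i (vote i) (vote j) (hvA i) (hij ▸ hvA j) (hvL i) ?_
      rw [hvote i]; simp [Ne.symm hne]
    have h2 : f (vote j) < f (vote i) := by
      refine hf j (vote j) (vote i) (hvA j) (hij ▸ hvA i) (hvL j) ?_
      rw [hvote j]; simp [hne]
    omega
  choose pidx hpidx using hPall
  choose rep hrep using hPrep
  set top : Fin g → C := fun j => vote (rep j) with htopdef
  have htopP : ∀ j, top j ∈ P j := fun j => (hrep j) ▸ hvA (rep j)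
  -- parties pairwise disjoint
  have hPdisj : ∀ j j' : Fin g, j ≠ j' → P j ∩ P j' = ∅ := by
    intro j j' hne
    rcases hPL.2 (rep j) (rep j') with h | h
    · exact absurd (hPinj (by rw [← hrep j, ← hrep j', h])) hne
    · rw [← hrep j, ← hrep j']; exact h
  -- a voter's party is determined by membership of their vote
  have hvote_party : ∀ (i : V) (j : Fin g), vote i ∈ P j → E.A i = P j := by
    intro i j hmem
    rcases hPL.2 i (rep j) with h | h
    · rw [h, hrep j]
    · exfalso
      have : vote i ∈ E.A i ∩ E.A (rep j) := mem_inter.mpr ⟨hvA i, (hrep j) ▸ hmem⟩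
      rw [h] at this; exact notMem_empty _ this
  -- candidate scores
  have hsLVc : ∀ c, sLVc E c = (univ.filter fun i => vote i = c).card := by
    intro c; unfold sLVc; congr 1; ext i
    simp [hvote i, eq_comm]
  have htopvote : ∀ (i : V) (j : Fin g), vote i = top j ↔ E.A i = P j := by
    intro i j
    constructor
    · intro h; exact hvote_party i j (h ▸ htopP j)
    · intro h; exact hsame i (rep j) (by rw [h, hrep j])
  have hLVtop : ∀ j, sLVc E (top j) = nParty E (P j) := by
    intro j
    rw [hsLVc]
    unfold nParty
    congr 1; ext i
    simp only [mem_filter, mem_univ, true_and]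
    exact htopvote i j
  -- LV-score as a count of voters
  have hsLV : ∀ W : Finset C, sLV E W = (univ.filter fun i => vote i ∈ W).card := by
    intro W
    rw [Finset.card_eq_sum_card_fiberwise
      (f := vote) (s := univ.filter fun i => vote i ∈ W) (t := W) (fun i hi => (mem_filter.mp hi).2)]
    unfold sLV
    refine Finset.sum_congr rfl fun c hc => ?_
    rw [hsLVc]
    congr 1
    ext i
    simp only [mem_filter, mem_univ, true_and]
    constructor
    · intro h; exact ⟨h ▸ hc, h⟩
    · rintro ⟨_, h⟩; exact h
  -- LV-score bounded by CC-score
  have hLVCC : ∀ W : Finset C, sLV E W ≤ sCC E W := by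
    intro W
    rw [hsLV]
    unfold sCC
    apply card_le_card
    intro i hi
    simp only [mem_filter, mem_univ, true_and] at hi ⊢
    exact ⟨vote i, mem_inter.mpr ⟨hi, hvA i⟩⟩
  -- CC-score decomposition by parties
  have hCC : ∀ W : Finset C, sCC E W =
      ∑ j ∈ univ.filter (fun j : Fin g => (W ∩ P j).Nonempty), nParty E (P j) := by
    intro W
    unfold sCC
    rw [Finset.card_eq_sum_card_fiberwise (f := pidx)
      (t := univ.filter fun j : Fin g => (W ∩ P j).Nonempty) ?_]
    · refine Finset.sum_congr rfl fun j hj => ?_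
      unfold nParty
      congr 1
      ext i
      simp only [mem_filter, mem_univ, true_and]
      constructor
      · rintro ⟨_, h⟩; rw [hpidx i, h]
      · intro h
        refine ⟨?_, hPinj (by rw [← hpidx i, h])⟩
        rw [h]
        exact (mem_filter.mp hj).2
    · intro i hi
      simp only [coe_filter, mem_filter, mem_univ, true_and, Set.mem_setOf_eq] at hi ⊢
      rw [← hpidx i]
      exact hi
  -- the set of represented parties is at most as large as the committee
  have hJcard : ∀ W : Finset C,
      (univ.filter fun j : Fin g => (W ∩ P j).Nonempty).card ≤ W.card := by
    intro W
    set J := univ.filter fun j : Fin g => (W ∩ P j).Nonempty with hJdef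
    rcases J.eq_empty_or_nonempty with h | ⟨j0, hj0⟩
    · simp [h]
    · obtain ⟨c0, _⟩ := (mem_filter.mp hj0).2
      apply card_le_card_of_injOn
        (fun j => if h : (W ∩ P j).Nonempty then h.choose else c0)
      · intro j hj
        have h := (mem_filter.mp hj).2
        simp only [dif_pos h]
        exact (mem_inter.mp h.choose_spec).1
      · intro j hj j' hj' heq
        by_contra hne'
        have h := (mem_filter.mp hj).2
        have h' := (mem_filter.mp hj').2
        simp only [dif_pos h, dif_pos h'] at heq
        have m1 : h.choose ∈ P j := (mem_inter.mp h.choose_spec).2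
        have m2 : h'.choose ∈ P j' := (mem_inter.mp h'.choose_spec).2
        have : h'.choose ∈ P j ∩ P j' := mem_inter.mpr ⟨heq ▸ m1, m2⟩
        rw [hPdisj j j' hne'] at this
        exact notMem_empty _ this
  set S := ∑ j ∈ univ.filter (fun j : Fin g => (j : ℕ) < min E.k g), nParty E (P j)
    with hSdef
  -- upper bound for every committee of size k
  have hupper : ∀ W' : Finset C, W'.card = E.k → sCC E W' ≤ S := by
    intro W' hW'
    rw [hCC W']
    apply top_sum (fun j => nParty E (P j)) hanti
    refine le_min ?_ ?_
    · rw [← hW']; exact hJcard W'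
    · simpa using
        Finset.card_le_univ (univ.filter fun j : Fin g => (W' ∩ P j).Nonempty)
  -- top candidates are pairwise distinct
  have htopinj : Function.Injective top := by
    intro j j' h
    by_contra hne
    have : top j' ∈ P j ∩ P j' := mem_inter.mpr ⟨h ▸ htopP j, htopP j'⟩
    rw [hPdisj j j' hne] at this
    exact notMem_empty _ this
  -- a committee of size k achieving LV-score at least S
  set T := (univ.filter fun j : Fin g => (j : ℕ) < min E.k g).image top with hTdef
  have hTcard : T.card ≤ E.k := by
    calc T.card ≤ (univ.filter fun j : Fin g => (j : ℕ) < min E.k g).card :=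
          card_image_le
      _ ≤ (Finset.range (min E.k g)).card := by
          apply card_le_card_of_injOn Fin.val
          · intro j hj; exact mem_range.mpr (mem_filter.mp hj).2
          · exact fun a _ b _ h => Fin.val_injective h
      _ = min E.k g := card_range _
      _ ≤ E.k := min_le_left _ _
  obtain ⟨W0, hTW0, _, hW0card⟩ :=
    Finset.exists_subsuperset_card_eq (Finset.subset_univ T) hTcard
      (by simpa using E.k_le_card)
  have hW0LV : S ≤ sLV E W0 := by
    have h1 : S = ∑ c ∈ T, sLVc E c := by
      rw [hTdef, Finset.sum_image (fun a _ b _ h => htopinj h), hSdef]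
      exact Finset.sum_congr rfl fun j _ => (hLVtop j).symm
    rw [h1]
    exact Finset.sum_le_sum_of_subset hTW0
  -- conclusion
  intro W hW
  obtain ⟨hWcard, hWmax⟩ := hW
  have key : S ≤ sCC E W :=
    le_trans hW0LV (le_trans (hWmax W0 hW0card) (hLVCC W))
  have hWS : sCC E W = S := le_antisymm (hupper W hWcard) key
  exact ⟨fun W' hW' => hWS ▸ hupper W' hW', hWS⟩
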